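/- Theorem 1 (general real m with |m| ≥ 1, k ≥ 0 real): lim_{n→∞} ∫₀¹ (1-u)^k · sin(2πnu/m) · cot(πu/m) du = |m|/2, where n ranges over positive integers. -/

import Mathlib

open Real Filter intervalIntegral MeasureTheory

/-- The modified Dirichlet kernel. -/
noncomputable def rlK (n : ℕ) (v : ℝ) : ℝ :=
  Real.cos (2*π*n*v) + 2 * ∑ j ∈ Finset.range n, Real.cos (2*π*j*v) - 1

lemma rlK_id (n : ℕ) (v : ℝ) :
    Real.sin (2*π*n*v) * Real.cos (π*v) = Real.sin (π*v) * rlK n v := by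
  induction n with
  | zero => simp [rlK]
  | succ n ih =>
    have h2 : 2*π*((n:ℝ)+1)*v = 2*π*n*v + 2*(π*v) := by ring
    unfold rlK at ih ⊢
    push_cast
    rw [Finset.sum_range_succ, h2, Real.sin_add, Real.cos_add, Real.sin_two_mul,
      Real.cos_two_mul']
    linear_combination ih + (Real.sin (2*π*(n:ℝ)*v) * Real.cos (π*v)
      + Real.cos (2*π*(n:ℝ)*v) * Real.sin (π*v)) * (Real.sin_sq_add_cos_sq (π*v))

lemma rlK_cot {v : ℝ} (hv : Real.sin (π*v) ≠ 0) (n : ℕ) :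
    Real.sin (2*π*n*v) * Real.cot (π*v) = rlK n v := by
  rw [Real.cot_eq_cos_div_sin]
  field_simp
  exact rlK_id n v

lemma rlK_continuous (n : ℕ) : Continuous (rlK n) := by
  unfold rlK
  apply Continuous.sub
  apply Continuous.add
  · exact Real.continuous_cos.comp (by continuity)
  · exact continuous_const.mul (continuous_finset_sum _ fun j _ =>
      Real.continuous_cos.comp (by continuity))
  · exact continuous_const

lemma integral_one_sub_mul_cos {c : ℝ} (hc : c ≠ 0) :
    ∫ v in (0:ℝ)..1, (1-v) * Real.cos (c*v) = (1 - Real.cos c) / c^2 := by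
  have key : ∀ v ∈ Set.uIcc (0:ℝ) 1, HasDerivAt
      (fun v : ℝ => (1-v) * Real.sin (c*v) / c - Real.cos (c*v) / c^2)
      ((1-v) * Real.cos (c*v)) v := by
    intro v _
    have hcv : HasDerivAt (fun v : ℝ => c*v) c v := by
      simpa using (hasDerivAt_id v).const_mul c
    have hs : HasDerivAt (fun v : ℝ => Real.sin (c*v)) (Real.cos (c*v) * c) v :=
      (Real.hasDerivAt_sin (c*v)).comp v hcv
    have hco : HasDerivAt (fun v : ℝ => Real.cos (c*v)) (-Real.sin (c*v) * c) v :=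
      (Real.hasDerivAt_cos (c*v)).comp v hcv
    have h1 : HasDerivAt (fun v : ℝ => 1 - v) (-1) v := by
      simpa using (hasDerivAt_id v).const_sub 1
    have := ((h1.mul hs).div_const c).sub (hco.div_const (c^2))
    refine this.congr_deriv ?_
    field_simp
    ring
  have hint : IntervalIntegrable (fun v : ℝ => (1-v) * Real.cos (c*v)) volume 0 1 :=
    Continuous.intervalIntegrable ((continuous_const.sub continuous_id).mul
      (Real.continuous_cos.comp (continuous_const.mul continuous_id))) 0 1
  rw [intervalIntegral.integral_eq_sub_of_hasDerivAt key hint]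
  simp only [sub_self, zero_mul, mul_one, Real.cos_zero, Real.sin_zero, mul_zero,
    zero_div, one_mul]
  field_simp
  ring

lemma integral_one_sub : ∫ v in (0:ℝ)..1, (1-v) = 1/2 := by
  have h1 : IntervalIntegrable (fun _ : ℝ => (1:ℝ)) volume 0 1 := intervalIntegrable_const
  have h2 : IntervalIntegrable (fun v : ℝ => v) volume 0 1 :=
    Continuous.intervalIntegrable continuous_id 0 1
  rw [intervalIntegral.integral_sub h1 h2, integral_id]
  simp
  norm_num

lemma integral_one_sub_mul_rlK {n : ℕ} (hn : 1 ≤ n) :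
    ∫ v in (0:ℝ)..1, (1-v) * rlK n v = 1/2 := by
  have hcospi : ∀ j : ℕ, 1 ≤ j → ∫ v in (0:ℝ)..1, (1-v) * Real.cos (2*π*j*v) = 0 := by
    intro j hj
    have hjpos : (0:ℝ) < j := by exact_mod_cast hj
    have hc : (2*π*(j:ℝ)) ≠ 0 := by positivity
    rw [show (fun v : ℝ => (1-v) * Real.cos (2*π*(j:ℝ)*v))
        = fun v : ℝ => (1-v) * Real.cos ((2*π*(j:ℝ))*v) by
      funext v; ring_nf]
    rw [integral_one_sub_mul_cos hc]
    have hone : Real.cos (2*π*(j:ℝ)) = 1 := by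
      rw [show 2*π*(j:ℝ) = (j:ℝ)*(2*π) by ring]
      exact Real.cos_nat_mul_two_pi j
    rw [hone]; simp
  have hterm : ∀ j : ℕ, ∫ v in (0:ℝ)..1, (1-v) * (2 * Real.cos (2*π*j*v))
      = if j = 0 then 1 else 0 := by
    intro j
    have : (fun v : ℝ => (1-v) * (2 * Real.cos (2*π*(j:ℝ)*v)))
        = fun v : ℝ => 2 * ((1-v) * Real.cos (2*π*(j:ℝ)*v)) := by funext v; ring
    rw [this, intervalIntegral.integral_const_mul]
    rcases Nat.eq_zero_or_pos j with hj | hj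
    · subst hj
      rw [intervalIntegral.integral_congr (g := fun v : ℝ => (1-v))
        (fun v _ => by push_cast; simp)]
      rw [integral_one_sub, if_pos rfl]; norm_num
    · rw [hcospi j hj, if_neg (Nat.one_le_iff_ne_zero.mp hj)]
      simp
  have hsplit : ∀ v : ℝ, (1-v) * rlK n v
      = (1-v) * Real.cos (2*π*n*v)
        + (∑ j ∈ Finset.range n, (1-v) * (2 * Real.cos (2*π*j*v))) - (1-v) := by
    intro v
    simp only [rlK, mul_sub, mul_add, mul_one, Finset.mul_sum]
  rw [intervalIntegral.integral_congr (g := fun v => (1-v) * Real.cos (2*π*n*v)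
        + (∑ j ∈ Finset.range n, (1-v) * (2 * Real.cos (2*π*j*v))) - (1-v))
      (fun v _ => hsplit v)]
  have hcont : ∀ (c : ℝ), Continuous (fun v : ℝ => (1-v) * Real.cos (c*v)) := fun c =>
    (continuous_const.sub continuous_id).mul
      (Real.continuous_cos.comp (continuous_const.mul continuous_id))
  have hcont2 : ∀ (j : ℕ), Continuous (fun v : ℝ => (1-v) * (2 * Real.cos (2*π*(j:ℝ)*v))) :=
    fun j => (continuous_const.sub continuous_id).mul (continuous_const.mul
      (Real.continuous_cos.comp (continuous_const.mul continuous_id)))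
  have hint1 : IntervalIntegrable (fun v : ℝ => (1-v) * Real.cos (2*π*(n:ℝ)*v)) volume 0 1 :=
    Continuous.intervalIntegrable (hcont _) 0 1
  have hint2 : IntervalIntegrable
      (fun v : ℝ => ∑ j ∈ Finset.range n, (1-v) * (2 * Real.cos (2*π*(j:ℝ)*v))) volume 0 1 :=
    Continuous.intervalIntegrable (continuous_finset_sum _ fun j _ => hcont2 j) 0 1
  have hint3 : IntervalIntegrable (fun v : ℝ => (1:ℝ)-v) volume 0 1 :=
    Continuous.intervalIntegrable (continuous_const.sub continuous_id) 0 1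
  rw [intervalIntegral.integral_sub (hint1.add hint2) hint3,
    intervalIntegral.integral_add hint1 hint2,
    intervalIntegral.integral_finset_sum (fun j _ =>
      Continuous.intervalIntegrable (hcont2 j) 0 1)]
  rw [hcospi n hn, integral_one_sub]
  have : ∑ j ∈ Finset.range n, (∫ v in (0:ℝ)..1, (1-v) * (2 * Real.cos (2*π*(j:ℝ)*v))) = 1 := by
    rw [Finset.sum_congr rfl (fun j _ => hterm j)]
    rw [Finset.sum_ite_eq' (Finset.range n) 0 (fun _ => (1:ℝ))]
    simp [Finset.mem_range, hn]
    omega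
  rw [this]
  norm_num

/-- Riemann-Lebesgue lemma for sine integrals over an interval. -/
lemma rl_sin {h : ℝ → ℝ} {a b : ℝ} (hab : a ≤ b)
    (hh : IntegrableOn h (Set.Ioc a b)) {c : ℝ} (hc : c ≠ 0) :
    Tendsto (fun n : ℕ => ∫ u in a..b, h u * Real.sin (c * n * u)) atTop (nhds 0) := by
  set g : ℝ → ℂ := Set.indicator (Set.Ioc a b) (fun x => (h x : ℂ)) with hg
  have hgint : Integrable g := by
    rw [hg, integrable_indicator_iff measurableSet_Ioc]
    exact (hh.ofReal : IntegrableOn (fun x => (h x:ℂ)) _ _)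
  have key : ∀ n : ℕ, ∫ u in a..b, h u * Real.sin (c * n * u)
      = -(FourierTransform.fourier g (c * n / (2 * π))).im := by
    intro n
    rw [Real.fourier_real_eq_integral_exp_smul]
    have hint : Integrable (fun v : ℝ => Complex.exp (↑(-2 * π * v * (c * n / (2*π))) * Complex.I) • g v) := by
      apply hgint.bdd_mul (c := 1)
      · exact (Complex.continuous_exp.comp (by continuity)).aestronglyMeasurable
      · refine Filter.Eventually.of_forall (fun v => le_of_eq ?_)
        rw [Complex.norm_exp_ofReal_mul_I]
    have him := integral_im (𝕜 := ℂ) hint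
    simp only [RCLike.im_eq_complex_im] at him
    rw [← him, ← MeasureTheory.integral_neg]
    rw [intervalIntegral.integral_of_le hab, ← MeasureTheory.integral_indicator measurableSet_Ioc]
    congr 1
    funext v
    have hθ : (-2 * π * v * (c * n / (2*π))) = -(c * n * v) := by
      have hπ : (π:ℝ) ≠ 0 := Real.pi_ne_zero
      field_simp
    rw [smul_eq_mul, Complex.mul_im, hθ]
    by_cases hv : v ∈ Set.Ioc a b
    · rw [hg]
      simp only [Set.indicator_of_mem hv]
      simp only [Complex.exp_ofReal_mul_I_im, Complex.ofReal_im, Complex.ofReal_re,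
        Real.sin_neg]
      ring
    · simp [hg, Set.indicator_of_notMem hv]
  have hξ : Tendsto (fun n : ℕ => c * n / (2 * π)) atTop (Filter.cocompact ℝ) := by
    rcases lt_or_gt_of_ne hc with hneg | hpos
    · refine Filter.Tendsto.mono_right ?_ _root_.atBot_le_cocompact
      have : Tendsto (fun n : ℕ => (n:ℝ)) atTop atTop := tendsto_natCast_atTop_atTop
      have h2 : c / (2*π) < 0 := div_neg_of_neg_of_pos hneg (by positivity)
      have := this.atTop_mul_const_of_neg h2
      refine this.congr (fun n => by ring)
    · refine Filter.Tendsto.mono_right ?_ _root_.atTop_le_cocompact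
      have : Tendsto (fun n : ℕ => (n:ℝ)) atTop atTop := tendsto_natCast_atTop_atTop
      have h2 : 0 < c / (2*π) := div_pos hpos (by positivity)
      have := this.atTop_mul_const h2
      refine this.congr (fun n => by ring)
  have hRL := (Real.zero_at_infty_fourier g).comp hξ
  have : Tendsto (fun n : ℕ => (FourierTransform.fourier g (c * n / (2 * π))).im) atTop (nhds 0) := by
    have := (Complex.continuous_im.tendsto 0).comp hRL
    exact this
  simpa [key] using this.neg

lemma sin_pi_lower {v : ℝ} (h0 : 0 ≤ v) (h1 : v ≤ 1) : 2*v*(1-v) ≤ Real.sin (π*v) := by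
  rcases le_or_gt v (1/2) with hv | hv
  · have hle : π*v ≤ π/2 := by nlinarith [Real.pi_pos]
    have := Real.mul_le_sin (x := π*v) (by positivity) hle
    have hne : (π:ℝ) ≠ 0 := Real.pi_ne_zero
    have h2 : 2/π*(π*v) = 2*v := by field_simp
    nlinarith [this, h2]
  · have heq : Real.sin (π*v) = Real.sin (π*(1-v)) := by
      rw [show π*(1-v) = π - π*v by ring, Real.sin_pi_sub]
    rw [heq]
    have hle : π*(1-v) ≤ π/2 := by nlinarith [Real.pi_pos]
    have := Real.mul_le_sin (x := π*(1-v)) (by nlinarith [Real.pi_pos]) hle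
    have hne : (π:ℝ) ≠ 0 := Real.pi_ne_zero
    have h2 : 2/π*(π*(1-v)) = 2*(1-v) := by field_simp
    nlinarith [this, h2]

lemma cot_abs_bound {v : ℝ} (h0 : 0 < v) (h1 : v < 1) :
    |Real.cot (π*v)| ≤ 1/(2*v*(1-v)) := by
  have hs : 0 < Real.sin (π*v) :=
    Real.sin_pos_of_pos_of_lt_pi (by positivity) (by nlinarith [Real.pi_pos])
  have hlow := sin_pi_lower h0.le h1.le
  have h2v : 0 < 2*v*(1-v) := by nlinarith
  rw [Real.cot_eq_cos_div_sin, abs_div, abs_of_pos hs]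
  exact div_le_div₀ (by norm_num) (Real.abs_cos_le_one _) h2v hlow

lemma rpow_one_sub_bound {k u : ℝ} (hk : 0 ≤ k) (h0 : 0 ≤ u) (h1 : u < 1) :
    |(1-u)^k - 1| ≤ (k+1)*u := by
  have hb0 : (0:ℝ) < 1-u := by linarith
  have hle1 : (1-u)^k ≤ 1 := Real.rpow_le_one hb0.le (by linarith) hk
  rw [abs_sub_comm, abs_of_nonneg (by linarith : (0:ℝ) ≤ 1 - (1-u)^k)]
  rcases le_or_gt 1 k with hk1 | hk1
  · have := one_add_mul_self_le_rpow_one_add (s := -u) (by linarith) hk1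
    rw [show (1:ℝ) + -u = 1 - u by ring] at this
    nlinarith
  · have h2 : (1-u)^(1:ℝ) ≤ (1-u)^k :=
      Real.rpow_le_rpow_of_exponent_ge hb0 (by linarith) hk1.le
    rw [Real.rpow_one] at h2
    nlinarith


lemma one_div_den_eq {m u : ℝ} (hm0 : 0 < m) (hu0 : 0 < u) (hmu : u < m) :
    1/(2*(u/m)*(1-u/m)) = m^2/(2*u*(m-u)) := by
  have h1 : (0:ℝ) < m - u := by linarith
  have h2 : (0:ℝ) < u/m := div_pos hu0 hm0
  have h3 : u/m < 1 := (div_lt_one hm0).mpr hmu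
  have h4 : (0:ℝ) < 2*(u/m)*(1-u/m) := by nlinarith
  rw [div_eq_div_iff (ne_of_gt h4) (by positivity)]
  field_simp

lemma den_helper_sum {m u P : ℝ} (hm0 : 0 < m) (hu0 : 0 < u) (hmu : u < m) :
    (P + (1-u/m)) * (1/(2*(u/m)*(1-u/m))) = P * (m^2/(2*u*(m-u))) + m/(2*u) := by
  rw [one_div_den_eq hm0 hu0 hmu]
  have h1 : (0:ℝ) < m - u := by linarith
  field_simp

lemma ae_ne_real (c : ℝ) : ∀ᵐ x : ℝ, x ≠ c := by
  have h0 : volume ({c} : Set ℝ) = 0 := measure_singleton c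
  rw [MeasureTheory.ae_iff]
  simpa using h0

set_option maxHeartbeats 1000000 in
lemma tendsto_main_pos (m k : ℝ) (hm : 1 ≤ m) (hk : 0 ≤ k)
    (h : ¬ (k = 0 ∧ m = 1)) :
    Filter.Tendsto
      (fun n : ℕ => ∫ u in (0:ℝ)..1,
        (1 - u) ^ k * Real.sin (2 * π * n * u / m) * Real.cot (π * u / m))
      Filter.atTop (nhds (m / 2)) := by
  have hm0 : (0:ℝ) < m := by linarith
  have hmne : m ≠ 0 := ne_of_gt hm0
  have hrpow_cont : Continuous (fun u : ℝ => (1-u)^k) :=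
    (continuous_const.sub continuous_id).rpow_const (fun x => Or.inr hk)
  have hsinpos : ∀ v : ℝ, 0 < v → v < 1 → 0 < Real.sin (π*v) := fun v a b =>
    Real.sin_pos_of_pos_of_lt_pi (by positivity) (by nlinarith [Real.pi_pos])
  set g1 : ℝ → ℝ := fun u => ((1-u)^k - (1-u/m)) * Real.cot (π*u/m) with hg1
  set g2 : ℝ → ℝ := fun u => (1-u/m) * Real.cot (π*u/m) with hg2
  have hlin : Continuous (fun u : ℝ => u/m) := continuous_id.div_const m
  have hrlKc : ∀ n : ℕ, Continuous (fun u : ℝ => rlK n (u/m)) :=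
    fun n => (rlK_continuous n).comp hlin
  have hint1 : ∀ n : ℕ, IntervalIntegrable (fun u : ℝ => (1-u)^k * rlK n (u/m)) volume 0 1 :=
    fun n => (hrpow_cont.mul (hrlKc n)).intervalIntegrable 0 1
  have hGc : ∀ n : ℕ, Continuous (fun u : ℝ => (1-u/m) * rlK n (u/m)) :=
    fun n => (continuous_const.sub hlin).mul (hrlKc n)
  -- Step E1
  have E1 : ∀ n : ℕ, (∫ u in (0:ℝ)..1,
      (1 - u) ^ k * Real.sin (2 * π * n * u / m) * Real.cot (π * u / m))
      = ∫ u in (0:ℝ)..1, (1-u)^k * rlK n (u/m) := by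
    intro n
    apply intervalIntegral.integral_congr_ae
    filter_upwards [ae_ne_real 1] with x hx1 hxI
    have hx : x ∈ Set.Ioc (0:ℝ) 1 := by rwa [Set.uIoc_of_le (by norm_num : (0:ℝ) ≤ 1)] at hxI
    have hx0 : 0 < x := hx.1
    have hxlt : x < 1 := lt_of_le_of_ne hx.2 hx1
    have hv0 : 0 < x/m := div_pos hx0 hm0
    have hv1 : x/m < 1 := by rw [div_lt_one hm0]; linarith
    have hsne : Real.sin (π*(x/m)) ≠ 0 := ne_of_gt (hsinpos _ hv0 hv1)
    have ha1 : 2*π*(n:ℝ)*x/m = 2*π*n*(x/m) := by ring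
    have ha2 : π*x/m = π*(x/m) := by ring
    rw [ha1, ha2, mul_assoc, rlK_cot hsne n]
  -- exact value of the reference integral
  have E2 : ∀ n : ℕ, 1 ≤ n → (∫ u in (0:ℝ)..m, (1-u/m) * rlK n (u/m)) = m/2 := by
    intro n hn
    have := intervalIntegral.integral_comp_div (a := 0) (b := m) (c := m)
      (f := fun v => (1-v) * rlK n v) hmne
    rw [zero_div, div_self hmne] at this
    rw [this, integral_one_sub_mul_rlK hn, smul_eq_mul]
    ring
  have E3 : ∀ n : ℕ, (∫ u in (0:ℝ)..1, (1-u/m) * rlK n (u/m))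
      + (∫ u in (1:ℝ)..m, (1-u/m) * rlK n (u/m))
      = ∫ u in (0:ℝ)..m, (1-u/m) * rlK n (u/m) :=
    fun n => intervalIntegral.integral_add_adjacent_intervals
      ((hGc n).intervalIntegrable 0 1) ((hGc n).intervalIntegrable 1 m)
  have E4 : ∀ n : ℕ, (∫ u in (0:ℝ)..1, ((1-u)^k - (1-u/m)) * rlK n (u/m))
      = (∫ u in (0:ℝ)..1, (1-u)^k * rlK n (u/m))
        - ∫ u in (0:ℝ)..1, (1-u/m) * rlK n (u/m) := by
    intro n
    rw [intervalIntegral.integral_congr (g := fun u =>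
        (1-u)^k * rlK n (u/m) - (1-u/m) * rlK n (u/m)) (fun u _ => by ring)]
    exact intervalIntegral.integral_sub (hint1 n) ((hGc n).intervalIntegrable 0 1)
  -- A and B as sine integrals
  have hA : ∀ n : ℕ, (∫ u in (0:ℝ)..1, ((1-u)^k - (1-u/m)) * rlK n (u/m))
      = ∫ u in (0:ℝ)..1, g1 u * Real.sin ((2*π/m) * n * u) := by
    intro n
    apply intervalIntegral.integral_congr_ae
    filter_upwards [ae_ne_real 1] with x hx1 hxI
    have hx : x ∈ Set.Ioc (0:ℝ) 1 := by rwa [Set.uIoc_of_le (by norm_num : (0:ℝ) ≤ 1)] at hxI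
    have hx0 : 0 < x := hx.1
    have hxlt : x < 1 := lt_of_le_of_ne hx.2 hx1
    have hv0 : 0 < x/m := div_pos hx0 hm0
    have hv1 : x/m < 1 := by rw [div_lt_one hm0]; linarith
    have hsne : Real.sin (π*(x/m)) ≠ 0 := ne_of_gt (hsinpos _ hv0 hv1)
    have ha2 : π*x/m = π*(x/m) := by ring
    have ha3 : (2*π/m)*(n:ℝ)*x = 2*π*n*(x/m) := by ring
    rw [hg1]
    simp only []
    rw [ha2, ha3, ← rlK_cot hsne n]
    ring
  have hB : ∀ n : ℕ, (∫ u in (1:ℝ)..m, (1-u/m) * rlK n (u/m))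
      = ∫ u in (1:ℝ)..m, g2 u * Real.sin ((2*π/m) * n * u) := by
    intro n
    apply intervalIntegral.integral_congr_ae
    filter_upwards [ae_ne_real m] with x hxm hxI
    have hx : x ∈ Set.Ioc (1:ℝ) m := by rwa [Set.uIoc_of_le hm] at hxI
    have hx0 : (0:ℝ) < x := lt_trans one_pos hx.1
    have hxlt : x < m := lt_of_le_of_ne hx.2 hxm
    have hv0 : 0 < x/m := div_pos hx0 hm0
    have hv1 : x/m < 1 := by rw [div_lt_one hm0]; linarith
    have hsne : Real.sin (π*(x/m)) ≠ 0 := ne_of_gt (hsinpos _ hv0 hv1)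
    have ha2 : π*x/m = π*(x/m) := by ring
    have ha3 : (2*π/m)*(n:ℝ)*x = 2*π*n*(x/m) := by ring
    rw [hg2]
    simp only []
    rw [ha2, ha3, ← rlK_cot hsne n]
    ring
  -- integrability of g1 on Ioc 0 1
  have hcotOn : ∀ (a b : ℝ), (∀ u ∈ Set.Ioo a b, Real.sin (π*u/m) ≠ 0) →
      ContinuousOn (fun u : ℝ => Real.cot (π*u/m)) (Set.Ioo a b) := by
    intro a b hne
    have hc : ContinuousOn (fun u : ℝ => Real.cos (π*u/m) / Real.sin (π*u/m))
        (Set.Ioo a b) := by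
      apply ContinuousOn.div
      · exact (Real.continuous_cos.comp ((continuous_const.mul continuous_id).div_const m)).continuousOn
      · exact (Real.continuous_sin.comp ((continuous_const.mul continuous_id).div_const m)).continuousOn
      · exact hne
    exact hc.congr (fun u hu => Real.cot_eq_cos_div_sin _)
  have hsinne1 : ∀ u : ℝ, u ∈ Set.Ioo (0:ℝ) 1 → Real.sin (π*u/m) ≠ 0 := by
    intro u hu
    have hv0 : 0 < u/m := div_pos hu.1 hm0
    have hv1 : u/m < 1 := by rw [div_lt_one hm0]; linarith [hu.2]
    have := hsinpos _ hv0 hv1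
    rw [show π*(u/m) = π*u/m by ring] at this
    exact ne_of_gt this
  have Ig1 : IntegrableOn g1 (Set.Ioc 0 1) := by
    rw [integrableOn_Ioc_iff_integrableOn_Ioo]
    have hmeas : AEStronglyMeasurable g1 (volume.restrict (Set.Ioo (0:ℝ) 1)) := by
      apply ContinuousOn.aestronglyMeasurable _ measurableSet_Ioo
      exact ((hrpow_cont.continuousOn).sub
        ((continuous_const.sub hlin).continuousOn)).mul (hcotOn 0 1 hsinne1)
    rcases eq_or_lt_of_le hk with hk0 | hkpos
    · -- k = 0, so m > 1
      have hm1 : 1 < m := by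
        rcases lt_or_eq_of_le hm with h1 | h1
        · exact h1
        · exact absurd ⟨hk0.symm, h1.symm⟩ h
      apply Integrable.mono (g := fun _ : ℝ => m/(2*(m-1)))
        (integrableOn_const measure_Ioo_lt_top.ne) hmeas
      rw [ae_restrict_iff' measurableSet_Ioo]
      refine MeasureTheory.ae_of_all _ (fun u hu => ?_)
      have hu0 : 0 < u := hu.1
      have hu1 : u < 1 := hu.2
      have hv0 : 0 < u/m := div_pos hu0 hm0
      have hv1 : u/m < 1 := by rw [div_lt_one hm0]; linarith
      have hcot := cot_abs_bound hv0 hv1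
      rw [show π*(u/m) = π*u/m by ring] at hcot
      have hrk : (1-u)^k = 1 := by rw [← hk0, Real.rpow_zero]
      rw [Real.norm_eq_abs, Real.norm_eq_abs,
        abs_of_pos (show (0:ℝ) < m/(2*(m-1)) from div_pos hm0 (by linarith))]
      rw [hg1]
      simp only []
      rw [hrk, abs_mul]
      have hnum : |1 - (1-u/m)| = u/m := by
        rw [show (1:ℝ) - (1-u/m) = u/m by ring, abs_of_pos hv0]
      rw [hnum]
      have step : u/m * |Real.cot (π*u/m)| ≤ (u/m) * (1/(2*(u/m)*(1-u/m))) :=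
        mul_le_mul_of_nonneg_left hcot hv0.le
      have hmu : u < m := by linarith
      have heq : (u/m) * (1/(2*(u/m)*(1-u/m))) = m/(2*(m-u)) := by
        rw [one_div_den_eq hm0 hu0 hmu]
        have h1 : (0:ℝ) < m - u := by linarith
        field_simp
      rw [heq] at step
      have hfin : m/(2*(m-u)) ≤ m/(2*(m-1)) :=
        div_le_div_of_nonneg_left hm0.le (by linarith) (by linarith)
      exact le_trans step hfin
    · -- k > 0
      have hrint : IntegrableOn (fun u : ℝ => (k+2)*m^2 + m + m^2 * (1-u)^(k-1))
          (Set.Ioo (0:ℝ) 1) := by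
        apply Integrable.add
        · exact integrableOn_const measure_Ioo_lt_top.ne
        · have h1 : IntervalIntegrable (fun x : ℝ => x ^ (k-1)) volume 0 1 :=
            intervalIntegral.intervalIntegrable_rpow' (by linarith)
          have h2 := (h1.comp_sub_left 1)
          simp only [sub_zero, sub_self] at h2
          have h3 : IntervalIntegrable (fun x : ℝ => (1-x) ^ (k-1)) volume 0 1 := h2.symm
          have h4 : IntegrableOn (fun x : ℝ => (1-x) ^ (k-1)) (Set.Ioc (0:ℝ) 1) := by
            rwa [intervalIntegrable_iff_integrableOn_Ioc_of_le (by norm_num)] at h3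
          exact (h4.mono_set Set.Ioo_subset_Ioc_self).const_mul _
      apply Integrable.mono hrint hmeas
      rw [ae_restrict_iff' measurableSet_Ioo]
      refine MeasureTheory.ae_of_all _ (fun u hu => ?_)
      have hu0 : 0 < u := hu.1
      have hu1 : u < 1 := hu.2
      have hmu : 0 < m - u := by linarith
      have hv0 : 0 < u/m := div_pos hu0 hm0
      have hv1 : u/m < 1 := by rw [div_lt_one hm0]; linarith
      have hcot := cot_abs_bound hv0 hv1
      rw [show π*(u/m) = π*u/m by ring] at hcot
      have h1u : (0:ℝ) < 1 - u := by linarith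
      have hPnn : (0:ℝ) ≤ (1-u)^k := Real.rpow_nonneg h1u.le k
      have hQnn : (0:ℝ) ≤ (1-u)^(k-1) := Real.rpow_nonneg h1u.le _
      have hQ : (1-u)^(k-1) = (1-u)^k / (1-u) := Real.rpow_sub_one (ne_of_gt h1u) k
      have hdpos : (0:ℝ) < 2*(u/m)*(1-u/m) := by nlinarith
      have hdinv : (0:ℝ) ≤ 1/(2*(u/m)*(1-u/m)) := (one_div_pos.mpr hdpos).le
      have humlt : u < m := by linarith
      have hbound : |g1 u| ≤ |(1-u)^k - (1-u/m)| * (1/(2*(u/m)*(1-u/m))) := by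
        rw [hg1]
        simp only []
        rw [abs_mul]
        exact mul_le_mul_of_nonneg_left hcot (abs_nonneg _)
      have hCnn : (0:ℝ) ≤ (k+2)*m^2 := by positivity
      rw [Real.norm_eq_abs, Real.norm_eq_abs,
        abs_of_nonneg (by nlinarith : (0:ℝ) ≤ (k+2)*m^2 + m + m^2 * (1-u)^(k-1))]
      refine le_trans hbound ?_
      rcases le_or_gt u (1/2) with hu2 | hu2
      · -- small u
        have hN : |(1-u)^k - (1-u/m)| ≤ (k+2)*u := by
          have h1 := rpow_one_sub_bound hkpos.le hu0.le hu1
          have h2 : |1 - (1-u/m)| = u/m := by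
            rw [show (1:ℝ) - (1-u/m) = u/m by ring, abs_of_pos hv0]
          have h3 : |(1-u)^k - (1-u/m)| ≤ |(1-u)^k - 1| + |1 - (1-u/m)| := by
            rw [show (1-u)^k - (1-u/m) = ((1-u)^k - 1) + (1 - (1-u/m)) by ring]
            exact abs_add_le _ _
          have h4 : u/m ≤ u := div_le_self hu0.le hm
          rw [h2] at h3
          linarith
        have step : |(1-u)^k - (1-u/m)| * (1/(2*(u/m)*(1-u/m)))
            ≤ ((k+2)*u) * (1/(2*(u/m)*(1-u/m))) :=
          mul_le_mul_of_nonneg_right hN hdinv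
        refine le_trans step ?_
        have heq : ((k+2)*u) * (1/(2*(u/m)*(1-u/m))) = (k+2)*m^2/(2*(m-u)) := by
          rw [one_div_den_eq hm0 hu0 humlt]
          have h1 : (0:ℝ) < m - u := by linarith
          field_simp
        rw [heq]
        have h5 : (k+2)*m^2/(2*(m-u)) ≤ (k+2)*m^2 := by
          rw [div_le_iff₀ (by linarith : (0:ℝ) < 2*(m-u))]
          nlinarith [hCnn]
        nlinarith [hQnn]
      · -- large u
        have hN : |(1-u)^k - (1-u/m)| ≤ (1-u)^k + (1-u/m) := by
          refine le_trans (abs_sub _ _) ?_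
          rw [abs_of_nonneg hPnn, abs_of_nonneg (by nlinarith : (0:ℝ) ≤ 1-u/m)]
        have step : |(1-u)^k - (1-u/m)| * (1/(2*(u/m)*(1-u/m)))
            ≤ ((1-u)^k + (1-u/m)) * (1/(2*(u/m)*(1-u/m))) :=
          mul_le_mul_of_nonneg_right hN hdinv
        refine le_trans step ?_
        have heq := den_helper_sum (P := (1-u)^k) hm0 hu0 humlt
        rw [heq]
        have t1 : (1-u)^k * (m^2/(2*u*(m-u))) ≤ m^2 * (1-u)^(k-1) := by
          have hd1 : m^2/(2*u*(m-u)) ≤ m^2/(1-u) := by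
            apply div_le_div_of_nonneg_left (by positivity) h1u
            nlinarith
          have := mul_le_mul_of_nonneg_left hd1 hPnn
          refine le_trans this (le_of_eq ?_)
          rw [hQ]
          ring
        have t2 : m/(2*u) ≤ m := by
          rw [div_le_iff₀ (by linarith : (0:ℝ) < 2*u)]
          nlinarith
        linarith [hCnn, t1, t2]
  -- integrability of g2 on Ioc 1 m
  have Ig2 : IntegrableOn g2 (Set.Ioc 1 m) := by
    rcases eq_or_lt_of_le hm with hm1 | hm1
    · rw [← hm1, Set.Ioc_self]
      exact integrableOn_empty
    · rw [integrableOn_Ioc_iff_integrableOn_Ioo]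
      have hsinne2 : ∀ u : ℝ, u ∈ Set.Ioo (1:ℝ) m → Real.sin (π*u/m) ≠ 0 := by
        intro u hu
        have hu0 : (0:ℝ) < u := lt_trans one_pos hu.1
        have hv0 : 0 < u/m := div_pos hu0 hm0
        have hv1 : u/m < 1 := by rw [div_lt_one hm0]; exact hu.2
        have := hsinpos _ hv0 hv1
        rw [show π*(u/m) = π*u/m by ring] at this
        exact ne_of_gt this
      have hmeas2 : AEStronglyMeasurable g2 (volume.restrict (Set.Ioo (1:ℝ) m)) := by
        apply ContinuousOn.aestronglyMeasurable _ measurableSet_Ioo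
        exact ((continuous_const.sub hlin).continuousOn).mul (hcotOn 1 m hsinne2)
      apply Integrable.mono (g := fun _ : ℝ => m/2)
        (integrableOn_const measure_Ioo_lt_top.ne) hmeas2
      rw [ae_restrict_iff' measurableSet_Ioo]
      refine MeasureTheory.ae_of_all _ (fun u hu => ?_)
      have hu0 : (0:ℝ) < u := lt_trans one_pos hu.1
      have hu1 : (1:ℝ) < u := hu.1
      have hv0 : 0 < u/m := div_pos hu0 hm0
      have hv1 : u/m < 1 := by rw [div_lt_one hm0]; exact hu.2
      have hcot := cot_abs_bound hv0 hv1
      rw [show π*(u/m) = π*u/m by ring] at hcot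
      rw [Real.norm_eq_abs, Real.norm_eq_abs,
        abs_of_pos (show (0:ℝ) < m/2 by positivity)]
      rw [hg2]
      simp only []
      rw [abs_mul]
      have hnum : |1 - u/m| = 1 - u/m := abs_of_pos (by linarith)
      rw [hnum]
      have step : (1-u/m) * |Real.cot (π*u/m)| ≤ (1-u/m) * (1/(2*(u/m)*(1-u/m))) :=
        mul_le_mul_of_nonneg_left hcot (by linarith)
      have heq : (1-u/m) * (1/(2*(u/m)*(1-u/m))) = m/(2*u) := by
        rw [one_div_den_eq hm0 hu0 hu.2]
        have hmu : (0:ℝ) < m - u := by linarith [hu.2]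
        field_simp
      rw [heq] at step
      have hfin : m/(2*u) ≤ m/2 :=
        div_le_div_of_nonneg_left hm0.le (by norm_num) (by linarith)
      exact le_trans step hfin
  -- Riemann-Lebesgue limits
  have hcpos : (0:ℝ) < 2*π/m := by positivity
  have hcne : (2*π/m) ≠ 0 := ne_of_gt hcpos
  have hAlim : Tendsto (fun n : ℕ => ∫ u in (0:ℝ)..1, g1 u * Real.sin ((2*π/m)*n*u))
      atTop (nhds 0) := rl_sin (by norm_num) Ig1 hcne
  have hBlim : Tendsto (fun n : ℕ => ∫ u in (1:ℝ)..m, g2 u * Real.sin ((2*π/m)*n*u))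
      atTop (nhds 0) := rl_sin hm Ig2 hcne
  have hfinal : ∀ n : ℕ, 1 ≤ n → (∫ u in (0:ℝ)..1,
      (1 - u) ^ k * Real.sin (2 * π * n * u / m) * Real.cot (π * u / m))
      = m/2 + (∫ u in (0:ℝ)..1, g1 u * Real.sin ((2*π/m)*n*u))
        - (∫ u in (1:ℝ)..m, g2 u * Real.sin ((2*π/m)*n*u)) := by
    intro n hn
    rw [E1 n]
    have e4 := E4 n
    have e3 := E3 n
    have e2 := E2 n hn
    have hAn := hA n
    have hBn := hB n
    rw [e2] at e3
    linarith [e4, e3, hAn, hBn]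
  have hlim : Tendsto (fun n : ℕ => m/2
      + (∫ u in (0:ℝ)..1, g1 u * Real.sin ((2*π/m)*n*u))
      - (∫ u in (1:ℝ)..m, g2 u * Real.sin ((2*π/m)*n*u))) atTop (nhds (m/2 + 0 - 0)) :=
    (tendsto_const_nhds.add hAlim).sub hBlim
  rw [show m/2 + 0 - 0 = m/2 by ring] at hlim
  refine Tendsto.congr' ?_ hlim
  filter_upwards [eventually_ge_atTop 1] with n hn
  exact (hfinal n hn).symm

theorem tendsto_integral_rpow_sin_cot (m k : ℝ) (hm : 1 ≤ |m|) (hk : 0 ≤ k)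
    (h : ¬ (k = 0 ∧ |m| = 1)) :
    Filter.Tendsto
      (fun n : ℕ => ∫ u in (0:ℝ)..1,
        (1 - u) ^ k * Real.sin (2 * π * n * u / m) * Real.cot (π * u / m))
      Filter.atTop (nhds (|m| / 2)) := by
  rcases le_or_gt 0 m with hm0 | hm0
  · have habs : |m| = m := abs_of_nonneg hm0
    rw [habs] at hm h ⊢
    exact tendsto_main_pos m k hm hk h
  · have habs : |m| = -m := abs_of_neg hm0
    rw [habs] at hm h ⊢
    have key : ∀ (n : ℕ) (u : ℝ),
        (1 - u) ^ k * Real.sin (2 * π * n * u / m) * Real.cot (π * u / m)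
        = (1 - u) ^ k * Real.sin (2 * π * n * u / (-m)) * Real.cot (π * u / (-m)) := by
      intro n u
      have h1 : 2 * π * n * u / m = -(2 * π * n * u / (-m)) := by
        field_simp
      have h2 : π * u / m = -(π * u / (-m)) := by field_simp
      rw [h1, h2, Real.sin_neg, Real.cot_eq_cos_div_sin, Real.cot_eq_cos_div_sin,
        Real.cos_neg, Real.sin_neg]
      field_simp
    have := tendsto_main_pos (-m) k hm hk h
    refine this.congr (fun n => ?_)
    exact intervalIntegral.integral_congr (fun u _ => (key n u).symm)
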